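/- Let 0 < a < 1, 0 < d < a, and let D = {z ∈ ℂ² : |z₁| < 1, |z₂| < 1, |z₂|² − a² < 2(1 − a²)|z₁|}. Define φ : 𝔻 → ℂ² by φ(λ) = (λ(λ − d)/(1 − dλ), λ). Then φ maps the open unit disc 𝔻 into D, φ(0) = (0,0), and φ(d) = (0, d). -/

import Mathlib

open Complex
set_option maxHeartbeats 800000

lemma auxA (d t x : ℝ) (hd0 : 0 < d) (hd1 : d < 1) (ht1 : t < 1) (ht0 : 0 ≤ t) (hx : x ≤ t) :
    (t - d)^2 * (1 - 2*d*x + d^2*t^2) ≤ (t^2 - 2*d*x + d^2) * (1 - d*t)^2 := by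
  nlinarith [mul_nonneg (mul_nonneg (mul_nonneg hd0.le
    (by nlinarith : (0:ℝ) ≤ 1 - d^2)) (by nlinarith : (0:ℝ) ≤ 1 - t^2)) (sub_nonneg.2 hx)]

lemma auxB (a d t : ℝ) (ha0 : 0 < a) (ha1 : a < 1) (hd0 : 0 < d) (hda : d < a)
    (hat : a ≤ t) (ht1 : t < 1) :
    (t^2 - a^2) * (1 - d*t) < 2 * (1 - a^2) * t * (t - d) := by
  nlinarith [mul_pos (sub_pos.2 hda) (sub_pos.2 ht1), sq_nonneg (t-a), sq_nonneg (t-1),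
    mul_nonneg (sub_nonneg.2 hat) (sub_pos.2 ht1).le, mul_pos ha0 hd0,
    mul_nonneg (mul_nonneg (sub_nonneg.2 hat) (sub_pos.2 ht1).le) hd0.le,
    mul_nonneg (mul_nonneg (sub_nonneg.2 hat) (sub_pos.2 hda).le) hd0.le]

lemma auxMain (a d : ℝ) (ha0 : 0 < a) (ha1 : a < 1) (hd0 : 0 < d) (hda : d < a)
    (l : ℂ) (hl1 : ‖l‖ < 1) :
    ‖l * (l - (d:ℂ)) / (1 - (d:ℂ) * l)‖ < 1 ∧
    (‖l‖)^2 - a^2 < 2*(1-a^2) * ‖l * (l - (d:ℂ)) / (1 - (d:ℂ) * l)‖ := by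
  have ht0 : 0 ≤ ‖l‖ := norm_nonneg l
  have hd1 : d < 1 := hda.trans ha1
  have hx : l.re ≤ ‖l‖ := Complex.re_le_norm l
  have ht2 : (‖l‖)^2 = l.re^2 + l.im^2 := by
    rw [Complex.sq_norm, Complex.normSq_apply]; ring
  have hden2 : (‖1 - (d:ℂ)*l‖)^2 = 1 - 2*d*l.re + d^2*(‖l‖)^2 := by
    rw [Complex.sq_norm, Complex.normSq_apply]
    simp [Complex.sub_re, Complex.sub_im, Complex.mul_re, Complex.mul_im]
    nlinarith [ht2]
  have hnum2 : (‖l - (d:ℂ)‖)^2 = (‖l‖)^2 - 2*d*l.re + d^2 := by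
    rw [Complex.sq_norm, Complex.normSq_apply]
    simp [Complex.sub_re, Complex.sub_im]
    nlinarith [ht2]
  have hdenpos : 0 < ‖1 - (d:ℂ)*l‖ := by
    have h1 : ‖(d:ℂ)*l‖ = d * ‖l‖ := by
      rw [norm_mul, Complex.norm_real, Real.norm_eq_abs, abs_of_pos hd0]
    have h2 : ‖(1:ℂ)‖ - ‖(d:ℂ)*l‖ ≤ ‖1 - (d:ℂ)*l‖ := norm_sub_norm_le _ _
    simp only [norm_one, h1] at h2
    nlinarith
  have habsdiv : ‖l * (l - (d:ℂ)) / (1 - (d:ℂ) * l)‖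
      = ‖l‖ * ‖l - (d:ℂ)‖ / ‖1 - (d:ℂ)*l‖ := by
    rw [norm_div, norm_mul]
  have hlt : ‖l - (d:ℂ)‖ < ‖1 - (d:ℂ)*l‖ := by
    have hp : (0:ℝ) < (1 - (‖l‖)^2) * (1 - d^2) := by
      apply mul_pos <;> nlinarith
    have h2 : (‖l - (d:ℂ)‖)^2 < (‖1 - (d:ℂ)*l‖)^2 := by
      rw [hden2, hnum2]; nlinarith
    exact lt_of_pow_lt_pow_left₀ 2 hdenpos.le h2
  constructor
  · rw [habsdiv, div_lt_one hdenpos]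
    calc ‖l‖ * ‖l - (d:ℂ)‖ ≤ 1 * ‖l - (d:ℂ)‖ :=
          mul_le_mul_of_nonneg_right hl1.le (norm_nonneg _)
      _ = ‖l - (d:ℂ)‖ := one_mul _
      _ < _ := hlt
  · rw [habsdiv]
    rcases lt_or_ge (‖l‖) a with hta | hta
    · have hnn : 0 ≤ 2*(1-a^2) * (‖l‖ * ‖l - (d:ℂ)‖ / ‖1 - (d:ℂ)*l‖) := by
        apply mul_nonneg (by nlinarith)
        exact div_nonneg (mul_nonneg ht0 (norm_nonneg _)) hdenpos.le
      nlinarith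
    · have hdt1 : 0 < 1 - d * ‖l‖ := by nlinarith
      have hkey : (‖l‖ - d) / (1 - d * ‖l‖)
          ≤ ‖l - (d:ℂ)‖ / ‖1 - (d:ℂ)*l‖ := by
        rw [div_le_div_iff₀ hdt1 hdenpos]
        have hsq : ((‖l‖ - d) * ‖1 - (d:ℂ)*l‖)^2
            ≤ (‖l - (d:ℂ)‖ * (1 - d * ‖l‖))^2 := by
          rw [mul_pow, mul_pow, hden2, hnum2]
          have := auxA d (‖l‖) l.re hd0 hd1 hl1 ht0 hx
          nlinarith [this]
        have h1 : 0 ≤ ‖l - (d:ℂ)‖ * (1 - d * ‖l‖) :=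
          mul_nonneg (norm_nonneg _) hdt1.le
        exact le_of_pow_le_pow_left₀ two_ne_zero h1 hsq
      have hg := auxB a d (‖l‖) ha0 ha1 hd0 hda hta hl1
      have htpos : 0 < ‖l‖ := lt_of_lt_of_le ha0 hta
      calc (‖l‖)^2 - a^2
          < 2*(1-a^2) * ‖l‖ * ((‖l‖ - d)/(1 - d * ‖l‖)) := by
            rw [← mul_div_assoc, lt_div_iff₀ hdt1]; linarith [hg]
        _ ≤ 2*(1-a^2) * ‖l‖ * (‖l - (d:ℂ)‖ / ‖1 - (d:ℂ)*l‖) := by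
            apply mul_le_mul_of_nonneg_left hkey; nlinarith
        _ = 2*(1-a^2) * (‖l‖ * ‖l - (d:ℂ)‖ / ‖1 - (d:ℂ)*l‖) := by
            ring
/-- Example 5: for `0 < d < a < 1`, the disc `φ(l) = (l(l − d)/(1 − dl), l)` maps
the unit disc into `D = {z ∈ 𝔻² : |z₂|² − a² < 2(1 − a²)|z₁|}`, with `φ(0) = (0,0)`
and `φ(d) = (0,d)`. -/

theorem stmt3 (a d : ℝ) (ha0 : 0 < a) (ha1 : a < 1) (hd0 : 0 < d) (hda : d < a)
    (D : Set (ℂ × ℂ))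
    (hD : D = {z : ℂ × ℂ | ‖z.1‖ < 1 ∧ ‖z.2‖ < 1 ∧
      (‖z.2‖) ^ 2 - a ^ 2 < 2 * (1 - a ^ 2) * ‖z.1‖})
    (φ : ℂ → ℂ × ℂ)
    (hφ : ∀ l : ℂ, φ l = (l * (l - (d : ℂ)) / (1 - (d : ℂ) * l), l)) :
    (∀ l ∈ Metric.ball (0 : ℂ) 1, φ l ∈ D) ∧ φ 0 = (0, 0) ∧ φ d = (0, (d : ℂ)) := by
  refine ⟨?_, ?_, ?_⟩
  · intro l hl
    have hl1 : ‖l‖ < 1 := by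
      simpa [Complex.dist_eq] using hl
    obtain ⟨h1, h2⟩ := auxMain a d ha0 ha1 hd0 hda l hl1
    rw [hφ, hD]
    exact ⟨h1, hl1, h2⟩
  · rw [hφ]; norm_num
  · rw [hφ]; norm_num
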